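/- arXiv:1904.11861 — 4 statements merged into one kernel-verified Lean document; each statement's English description precedes it below -/
import Mathlib

section
/- Fix a ∈ (0,∞) and ε > 0. The function of ξ given by ((a+1)/(a+2+ε-(1+ε)ξ))^{a+1} - ξ has a unique zero ξ(a,ε) in the open interval (0,1). -/
open Real Set

namespace FixedPointAux

/-- The auxiliary log-difference function. -/
noncomputable def h (a ε ξ : ℝ) : ℝ :=
  (a + 1) * (Real.log (a + 1) - Real.log (a + 2 + ε - (1 + ε) * ξ)) - Real.log ξ

/-- The derivative of `h`. -/
noncomputable def φ (a ε x : ℝ) : ℝ :=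
  (a + 1) * ((1 + ε) / (a + 2 + ε - (1 + ε) * x)) - 1 / x

lemma D_pos {a ε : ℝ} (ha : 0 < a) (hε : 0 < ε) {x : ℝ} (hx : x ≤ 1) :
    0 < a + 2 + ε - (1 + ε) * x := by nlinarith

lemma hderiv {a ε : ℝ} (ha : 0 < a) (hε : 0 < ε) {x : ℝ} (hx0 : 0 < x) (hx1 : x ≤ 1) :
    HasDerivAt (h a ε) (φ a ε x) x := by
  have hD := D_pos ha hε hx1
  have h1 : HasDerivAt (fun ξ : ℝ => a + 2 + ε - (1 + ε) * ξ) (-(1 + ε)) x := by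
    simpa using (((hasDerivAt_id x).const_mul (1 + ε)).const_sub (a + 2 + ε))
  have h2 : HasDerivAt (fun ξ : ℝ => Real.log (a + 2 + ε - (1 + ε) * ξ))
      (-(1 + ε) / (a + 2 + ε - (1 + ε) * x)) x := h1.log hD.ne'
  have h3 : HasDerivAt Real.log x⁻¹ x := Real.hasDerivAt_log hx0.ne'
  have h4 := (((hasDerivAt_const x (Real.log (a + 1))).sub h2).const_mul (a + 1)).sub h3
  refine h4.congr_deriv ?_
  unfold φ
  field_simp
  ring

lemma key_iff {a ε : ℝ} (ha : 0 < a) (hε : 0 < ε) {ξ : ℝ} (h0 : 0 < ξ) (h1 : ξ ≤ 1) :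
    (((a + 1) / (a + 2 + ε - (1 + ε) * ξ)) ^ (a + 1) = ξ) ↔ h a ε ξ = 0 := by
  have hD := D_pos ha hε h1
  have hb : (0 : ℝ) < a + 1 := by linarith
  have hbase : 0 < (a + 1) / (a + 2 + ε - (1 + ε) * ξ) := div_pos hb hD
  have hf : 0 < ((a + 1) / (a + 2 + ε - (1 + ε) * ξ)) ^ (a + 1) :=
    Real.rpow_pos_of_pos hbase _
  have hlog : Real.log (((a + 1) / (a + 2 + ε - (1 + ε) * ξ)) ^ (a + 1))
      = (a + 1) * (Real.log (a + 1) - Real.log (a + 2 + ε - (1 + ε) * ξ)) := by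
    rw [Real.log_rpow hbase, Real.log_div hb.ne' hD.ne']
  constructor
  · intro he
    have : Real.log (((a + 1) / (a + 2 + ε - (1 + ε) * ξ)) ^ (a + 1)) = Real.log ξ := by rw [he]
    unfold h; linarith [hlog]
  · intro hz
    have hle : Real.log (((a + 1) / (a + 2 + ε - (1 + ε) * ξ)) ^ (a + 1)) = Real.log ξ := by
      unfold h at hz; linarith [hlog]
    exact Real.log_injOn_pos (Set.mem_Ioi.2 hf) (Set.mem_Ioi.2 h0) hle

lemma h_one {a ε : ℝ} : h a ε 1 = 0 := by
  have h1 : a + 2 + ε - (1 + ε) * 1 = a + 1 := by ring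
  unfold h
  rw [h1]
  simp

lemma phi_mono {a ε : ℝ} (ha : 0 < a) (hε : 0 < ε) {x₁ x₂ : ℝ}
    (hx1 : 0 < x₁) (hlt : x₁ < x₂) (hx2 : x₂ ≤ 1) : φ a ε x₁ < φ a ε x₂ := by
  have hD1 := D_pos ha hε (le_of_lt (lt_of_lt_of_le hlt hx2))
  have hD2 := D_pos ha hε hx2
  have hDlt : a + 2 + ε - (1 + ε) * x₂ < a + 2 + ε - (1 + ε) * x₁ := by nlinarith
  have t1 : (1 + ε) / (a + 2 + ε - (1 + ε) * x₁) < (1 + ε) / (a + 2 + ε - (1 + ε) * x₂) :=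
    div_lt_div_of_pos_left (by linarith) hD2 hDlt
  have t2 : 1 / x₂ < 1 / x₁ := one_div_lt_one_div_of_lt hx1 hlt
  have hb : (0 : ℝ) < a + 1 := by linarith
  have := mul_lt_mul_of_pos_left t1 hb
  unfold φ; linarith

lemma phi_pos {a ε : ℝ} (ha : 0 < a) (hε : 0 < ε) {x : ℝ}
    (hx0 : 0 < x) (hx1 : x ≤ 1)
    (hx : (a + 2 + ε) / ((1 + ε) * (a + 2)) < x) : 0 < φ a ε x := by
  have hD := D_pos ha hε hx1
  have hden : (0 : ℝ) < (1 + ε) * (a + 2) := by nlinarith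
  have hkey : a + 2 + ε < (1 + ε) * (a + 2) * x := by
    rw [div_lt_iff₀ hden] at hx; linarith
  have : 1 / x < (a + 1) * (1 + ε) / (a + 2 + ε - (1 + ε) * x) := by
    rw [div_lt_div_iff₀ hx0 hD]; nlinarith
  unfold φ
  rw [← mul_div_assoc]
  linarith

lemma zeros_eq_aux {a ε : ℝ} (ha : 0 < a) (hε : 0 < ε) {x y : ℝ}
    (hx : x ∈ Set.Ioo (0 : ℝ) 1) (hy : y ∈ Set.Ioo (0 : ℝ) 1)
    (hhx : h a ε x = 0) (hhy : h a ε y = 0) (hlt : x < y) : False := by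
  obtain ⟨hx0, hx1⟩ := hx
  obtain ⟨hy0, hy1⟩ := hy
  have hcont1 : ContinuousOn (h a ε) (Set.Icc x y) := fun t ht =>
    ((hderiv ha hε (lt_of_lt_of_le hx0 ht.1) (le_trans ht.2 hy1.le)).continuousAt).continuousWithinAt
  obtain ⟨c₁, hc₁, hc₁0⟩ := exists_hasDerivAt_eq_zero hlt hcont1 (hhx.trans hhy.symm)
    (fun t ht => hderiv ha hε (lt_trans hx0 ht.1) (le_trans ht.2.le hy1.le))
  have hcont2 : ContinuousOn (h a ε) (Set.Icc y 1) := fun t ht =>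
    ((hderiv ha hε (lt_of_lt_of_le hy0 ht.1) ht.2).continuousAt).continuousWithinAt
  obtain ⟨c₂, hc₂, hc₂0⟩ := exists_hasDerivAt_eq_zero hy1 hcont2 (hhy.trans h_one.symm)
    (fun t ht => hderiv ha hε (lt_trans hy0 ht.1) ht.2.le)
  have : φ a ε c₁ < φ a ε c₂ :=
    phi_mono ha hε (lt_trans hx0 hc₁.1) (lt_trans hc₁.2 hc₂.1) hc₂.2.le
  rw [hc₁0, hc₂0] at this
  exact lt_irrefl 0 this

end FixedPointAux

open FixedPointAux in
/-- For fixed `a, ε > 0`, the equation `((a+1)/(a+2+ε-(1+ε)ξ))^{a+1} = ξ`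
has a unique solution `ξ` in the open interval `(0,1)`. -/
theorem fixed_point_unique (a ε : ℝ) (ha : 0 < a) (hε : 0 < ε) :
    ∃! ξ : ℝ, ξ ∈ Set.Ioo (0 : ℝ) 1 ∧
      ((a + 1) / (a + 2 + ε - (1 + ε) * ξ)) ^ (a + 1) = ξ := by
  have hb : (0 : ℝ) < a + 1 := by linarith
  -- the positive point near 0
  set C : ℝ := (a + 1) * (Real.log (a + 2 + ε) - Real.log (a + 1)) with hC
  have hCpos : 0 < C := by
    have := Real.log_lt_log hb (show a + 1 < a + 2 + ε by linarith)
    have : 0 < Real.log (a + 2 + ε) - Real.log (a + 1) := by linarith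
    positivity
  set p : ℝ := Real.exp (-(C + 1)) with hp
  have hp0 : 0 < p := Real.exp_pos _
  have hp1 : p < 1 := by
    have := Real.exp_lt_exp.2 (show -(C + 1) < (0:ℝ) by linarith)
    rw [Real.exp_zero] at this
    exact this
  have hhp : 1 ≤ h a ε p := by
    have hDp := D_pos ha hε hp1.le
    have hDle : a + 2 + ε - (1 + ε) * p ≤ a + 2 + ε := by nlinarith
    have hlogD : Real.log (a + 2 + ε - (1 + ε) * p) ≤ Real.log (a + 2 + ε) :=
      Real.log_le_log hDp hDle
    have hlogp : Real.log p = -(C + 1) := Real.log_exp _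
    unfold h
    rw [hlogp]
    nlinarith
  -- the negative point near 1
  set t : ℝ := (a + 2 + ε) / ((1 + ε) * (a + 2)) with ht
  have hden : (0 : ℝ) < (1 + ε) * (a + 2) := by nlinarith
  have ht1 : t < 1 := by
    rw [ht, div_lt_one hden]; nlinarith
  set s : ℝ := max p t with hs
  have hs0 : 0 < s := lt_of_lt_of_le hp0 (le_max_left _ _)
  have hs1 : s < 1 := max_lt hp1 ht1
  set r : ℝ := (s + 1) / 2 with hr
  have hsr : s < r := by rw [hr]; linarith
  have hr1 : r < 1 := by rw [hr]; linarith
  have hr0 : 0 < r := lt_trans hs0 hsr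
  -- h is strictly monotone on [s, 1]
  have hmono : StrictMonoOn (h a ε) (Set.Icc s 1) := by
    apply strictMonoOn_of_deriv_pos (convex_Icc s 1)
    · exact fun x hx =>
        ((hderiv ha hε (lt_of_lt_of_le hs0 hx.1) hx.2).continuousAt).continuousWithinAt
    · intro x hx
      rw [interior_Icc] at hx
      have hx0 : 0 < x := lt_trans hs0 hx.1
      rw [(hderiv ha hε hx0 hx.2.le).deriv]
      exact phi_pos ha hε hx0 hx.2.le (lt_of_le_of_lt (le_max_right p t) hx.1)
  have hhr : h a ε r < 0 := by
    have := hmono (Set.mem_Icc.2 ⟨hsr.le, hr1.le⟩) (Set.mem_Icc.2 ⟨hs1.le, le_refl 1⟩) hr1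
    rwa [h_one] at this
  have hpr : p < r := lt_of_le_of_lt (le_max_left p t) hsr
  have hcont : ContinuousOn (h a ε) (Set.Icc p r) := fun x hx =>
    ((hderiv ha hε (lt_of_lt_of_le hp0 hx.1)
      (le_trans hx.2 hr1.le)).continuousAt).continuousWithinAt
  have h0mem : (0 : ℝ) ∈ Set.Ioo (h a ε r) (h a ε p) := ⟨hhr, by linarith⟩
  obtain ⟨ξ, hξmem, hξ0⟩ := intermediate_value_Ioo' hpr.le hcont h0mem
  have hξIoo : ξ ∈ Set.Ioo (0 : ℝ) 1 := ⟨lt_trans hp0 hξmem.1, lt_trans hξmem.2 hr1⟩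
  refine ⟨ξ, ⟨hξIoo, (key_iff ha hε hξIoo.1 hξIoo.2.le).2 hξ0⟩, ?_⟩
  rintro y ⟨hyIoo, hyeq⟩
  have hyz : h a ε y = 0 := (key_iff ha hε hyIoo.1 hyIoo.2.le).1 hyeq
  rcases lt_trichotomy y ξ with hlt | heq | hgt
  · exact (zeros_eq_aux ha hε hyIoo hξIoo hyz hξ0 hlt).elim
  · exact heq
  · exact (zeros_eq_aux ha hε hξIoo hyIoo hξ0 hyz hgt).elim
end

section
/- Fix a ∈ (0,∞) and ε > 0, and let ξ ∈ (0,1) satisfy ξ = (1 + (1+ε)(1-ξ)/(a+1))^{-(a+1)}. Then 1 - ξ < 2ε, and consequently ρ := 1 - ξ^{a/(a+1)} satisfies 0 < ρ < 2ε. -/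
/-- Quadratic lower bound: for `0 < x ≤ 1`, `(1-x) + (1-x)^2/2 ≤ -log x`. -/
lemma quad_le_neg_log {x : ℝ} (hx0 : 0 < x) (hx1 : x ≤ 1) :
    (1 - x) + (1 - x) ^ 2 / 2 ≤ -Real.log x := by
  set f : ℝ → ℝ := fun y => Real.log y + (1 - y) + (1 - y) ^ 2 / 2 with hf
  have hderiv : ∀ y ∈ Set.Ioo x 1, HasDerivAt f (y⁻¹ - 2 + y) y := by
    intro y hy
    have hy0 : y ≠ 0 := by have := hx0.trans_le hy.1.le; linarith
    have h1 : HasDerivAt Real.log y⁻¹ y := Real.hasDerivAt_log hy0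
    have h2 : HasDerivAt (fun y : ℝ => (1 - y)) (-1) y := by
      simpa using (hasDerivAt_id y).const_sub 1
    have h3 := (h2.pow 2).div_const 2
    have := (h1.add h2).add h3
    refine this.congr_deriv ?_
    push_cast
    ring
  have hmono : MonotoneOn f (Set.Icc x 1) := by
    apply monotoneOn_of_deriv_nonneg (convex_Icc x 1)
    · apply ContinuousOn.add
      apply ContinuousOn.add
      · exact Real.continuousOn_log.mono (by
          intro y hy
          simp only [Set.mem_compl_iff, Set.mem_singleton_iff]
          have := hx0.trans_le hy.1
          linarith)
      · fun_prop
      · fun_prop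
    · intro y hy
      rw [interior_Icc] at hy
      exact (hderiv y hy).differentiableAt.differentiableWithinAt
    · intro y hy
      rw [interior_Icc] at hy
      have := (hderiv y hy).deriv
      rw [this]
      have hy0 : 0 < y := hx0.trans hy.1
      nlinarith [sq_nonneg (1 - y), mul_inv_cancel₀ hy0.ne', mul_pos hy0 (inv_pos.2 hy0)]
  have := hmono (Set.mem_Icc.2 ⟨le_refl x, hx1⟩) (Set.mem_Icc.2 ⟨hx1, le_refl 1⟩) hx1
  simp only [hf, Real.log_one] at this
  linarith

/-- If `ξ ∈ (0,1)` satisfies `ξ = (1 + (1+ε)(1-ξ)/(a+1))^{-(a+1)}`, then `1 - ξ < 2ε`,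
and consequently `ρ := 1 - ξ^{a/(a+1)}` satisfies `0 < ρ < 2ε`. -/
theorem rho_lt_two_eps (a ε ξ : ℝ) (ha : 0 < a) (hε : 0 < ε)
    (hξ : ξ ∈ Set.Ioo (0 : ℝ) 1)
    (hfix : ξ = (1 + (1 + ε) * (1 - ξ) / (a + 1)) ^ (-(a + 1))) :
    1 - ξ < 2 * ε ∧ 0 < 1 - ξ ^ (a / (a + 1)) ∧ 1 - ξ ^ (a / (a + 1)) < 2 * ε := by
  obtain ⟨hξ0, hξ1⟩ := hξ
  have ha1 : (0:ℝ) < a + 1 := by linarith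
  set b : ℝ := 1 + (1 + ε) * (1 - ξ) / (a + 1) with hb
  have hψpos : 0 < (1 + ε) * (1 - ξ) / (a + 1) :=
    div_pos (mul_pos (by linarith) (by linarith)) ha1
  have hb1 : 1 < b := by simp only [hb]; linarith
  have hb0 : 0 < b := by linarith
  -- take logs of the fixed point equation
  have hlog : Real.log ξ = (-(a + 1)) * Real.log b := by
    rw [hfix, Real.log_rpow hb0]
  -- upper bound: -log ξ < (1+ε)(1-ξ)
  have hup : -Real.log ξ < (1 + ε) * (1 - ξ) := by
    have hlb : Real.log b < b - 1 := Real.log_lt_sub_one_of_pos hb0 (by linarith)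
    have hbsub : b - 1 = (1 + ε) * (1 - ξ) / (a + 1) := by simp [hb]
    have : -Real.log ξ = (a + 1) * Real.log b := by rw [hlog]; ring
    rw [this]
    calc (a + 1) * Real.log b < (a + 1) * (b - 1) := by
          exact mul_lt_mul_of_pos_left hlb ha1
      _ = (1 + ε) * (1 - ξ) := by rw [hbsub]; field_simp
  -- lower bound
  have hlow : (1 - ξ) + (1 - ξ) ^ 2 / 2 ≤ -Real.log ξ := quad_le_neg_log hξ0 hξ1.le
  have hmain : 1 - ξ < 2 * ε := by nlinarith
  refine ⟨hmain, ?_, ?_⟩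
  · have : ξ ^ (a / (a + 1)) < 1 :=
      Real.rpow_lt_one hξ0.le hξ1 (div_pos ha ha1)
    linarith
  · have hle : ξ ≤ ξ ^ (a / (a + 1)) := by
      have := Real.rpow_le_rpow_of_exponent_ge hξ0 hξ1.le
        (show a / (a + 1) ≤ 1 by
          rw [div_le_one ha1]; linarith)
      simpa using this
    linarith
end

section
/- If D ~ NB(a, p) with a ∈ (0,∞), p = (1+ε)/(a+2+ε), ε > 0, and ξ ∈ (0,1) satisfies E[D ξ^{D-1}] = ξ E[D], then ((a+1)/(a+2+ε-(1+ε)ξ))^{a+1} = ξ, and 1 - E[ξ^D] = 1 - ξ^{a/(a+1)}. -/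
open Finset

/-- The negative binomial probability mass function with shape `a` and probability `p`. -/
noncomputable def nbPMF (a p : ℝ) (r : ℕ) : ℝ :=
  (∏ j ∈ Finset.range r, (a + (j : ℝ))) / (Nat.factorial r : ℝ) * (1 - p) ^ a * p ^ r

namespace NBaux
open Filter

/-- ascending-factorial coefficient -/
noncomputable def c (b : ℝ) (r : ℕ) : ℝ :=
  (∏ j ∈ Finset.range r, (b + (j : ℝ))) / (Nat.factorial r : ℝ)

lemma c_zero (b : ℝ) : c b 0 = 1 := by simp [c]

lemma c_pos {b : ℝ} (hb : 0 < b) (r : ℕ) : 0 < c b r := by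
  apply div_pos
  · exact Finset.prod_pos fun j _ => by positivity
  · exact_mod_cast Nat.factorial_pos r

lemma c_succ_mul (b : ℝ) (r : ℕ) :
    ((r : ℝ) + 1) * c b (r + 1) = (b + r) * c b r := by
  have h : (Nat.factorial r : ℝ) ≠ 0 := by exact_mod_cast (Nat.factorial_pos r).ne'
  simp only [c, Finset.prod_range_succ, Nat.factorial_succ]
  push_cast
  field_simp

lemma c_shift (b : ℝ) (r : ℕ) :
    ((r : ℝ) + 1) * c b (r + 1) = b * c (b + 1) r := by
  have h : (Nat.factorial r : ℝ) ≠ 0 := by exact_mod_cast (Nat.factorial_pos r).ne'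
  have hprod : ∏ j ∈ Finset.range (r + 1), (b + (j : ℝ))
      = b * ∏ j ∈ Finset.range r, (b + 1 + (j : ℝ)) := by
    rw [Finset.prod_range_succ']
    simp only [Nat.cast_add, Nat.cast_one, Nat.cast_zero, add_zero]
    rw [mul_comm]
    congr 1
    apply Finset.prod_congr rfl
    intro j _
    push_cast
    ring
  simp only [c, hprod, Nat.factorial_succ]
  push_cast
  field_simp

lemma summable_c {b x : ℝ} (hb : 0 < b) (hx : |x| < 1) :
    Summable (fun r : ℕ => c b r * x ^ r) := by
  set l : ℝ := (1 + |x|) / 2 with hl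
  have hl1 : l < 1 := by rw [hl]; linarith
  apply summable_of_ratio_norm_eventually_le hl1
  have htend : Tendsto (fun r : ℕ => (b + r) / ((r : ℝ) + 1) * |x|) atTop (nhds (1 * |x|)) := by
    apply Tendsto.mul_const
    have h1 : (fun r : ℕ => (b + r) / ((r : ℝ) + 1))
        = fun r : ℕ => (b - 1) / ((r : ℝ) + 1) + 1 := by
      funext r
      have : ((r : ℝ) + 1) ≠ 0 := by positivity
      field_simp
      ring
    rw [h1]
    have h2 : Tendsto (fun r : ℕ => (b - 1) / ((r : ℝ) + 1)) atTop (nhds 0) := by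
      apply Tendsto.div_atTop tendsto_const_nhds
      exact tendsto_atTop_add_const_right _ 1 tendsto_natCast_atTop_atTop
    simpa using h2.add tendsto_const_nhds
  have hlt : 1 * |x| < l := by rw [one_mul, hl]; linarith
  filter_upwards [htend.eventually_le_const hlt] with r hr
  have hcp := c_pos hb r
  have hcp1 := c_pos hb (r + 1)
  have key : c b (r + 1) = (b + r) / ((r : ℝ) + 1) * c b r := by
    have := c_succ_mul b r
    have h0 : ((r : ℝ) + 1) ≠ 0 := by positivity
    field_simp
    linarith [this]
  rw [norm_mul, norm_mul, norm_pow, norm_pow, Real.norm_eq_abs, Real.norm_eq_abs,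
    Real.norm_eq_abs, abs_of_pos hcp, abs_of_pos hcp1, key, pow_succ]
  calc (b + ↑r) / (↑r + 1) * c b r * (|x| ^ r * |x|)
      = ((b + ↑r) / (↑r + 1) * |x|) * (c b r * |x| ^ r) := by ring
    _ ≤ l * (c b r * |x| ^ r) := by
        apply mul_le_mul_of_nonneg_right hr
        positivity

lemma summable_d {b x : ℝ} (hb : 0 < b) (hx : |x| < 1) :
    Summable (fun r : ℕ => c b r * ((r : ℝ) * x ^ (r - 1))) := by
  rw [← summable_nat_add_iff 1]
  have h : (fun n : ℕ => c b (n + 1) * (((n : ℝ) + 1) * x ^ n))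
      = fun n : ℕ => b * (c (b + 1) n * x ^ n) := by
    funext n
    rw [show c b (n + 1) * (((n : ℝ) + 1) * x ^ n)
        = (((n : ℝ) + 1) * c b (n + 1)) * x ^ n from by ring, c_shift]
    ring
  have h2 : (fun n : ℕ => c b (n + 1) * ((((n + 1 : ℕ)) : ℝ) * x ^ (n + 1 - 1)))
      = fun n : ℕ => c b (n + 1) * (((n : ℝ) + 1) * x ^ n) := by
    funext n; push_cast; ring_nf
  rw [h2, h]
  exact (summable_c (by linarith) hx).mul_left b


/-- derivative of the power series -/
lemma hasDerivAt_g {b x u : ℝ} (hb : 0 < b) (hu1 : u < 1) (hx : x ∈ Set.Ioo (-u) u) :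
    HasDerivAt (fun y : ℝ => ∑' r : ℕ, c b r * y ^ r)
      (∑' r : ℕ, c b r * ((r : ℝ) * x ^ (r - 1))) x := by
  have hu0 : 0 < u := by
    have := hx.1; have := hx.2; linarith
  apply hasDerivAt_tsum_of_isPreconnected
    (u := fun n : ℕ => c b n * ((n : ℝ) * u ^ (n - 1)))
    (summable_d hb (by rwa [abs_of_pos hu0]))
    isOpen_Ioo (convex_Ioo _ _).isPreconnected
    (fun n y _ => (hasDerivAt_pow n y).const_mul (c b n))
    ?_ (y₀ := 0) ?_ ?_ hx
  · intro n y hy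
    have hcb := (c_pos hb n).le
    have hyu : |y| ≤ u := by
      rw [abs_le]; exact ⟨hy.1.le, hy.2.le⟩
    rw [Real.norm_eq_abs, abs_mul, abs_mul, abs_of_nonneg hcb, Nat.abs_cast, abs_pow]
    apply mul_le_mul_of_nonneg_left _ hcb
    apply mul_le_mul_of_nonneg_left _ (Nat.cast_nonneg n)
    exact pow_le_pow_left₀ (abs_nonneg y) hyu _
  · exact Set.mem_Ioo.mpr ⟨by linarith, hu0⟩
  · exact (summable_c hb (by simp : |(0:ℝ)| < 1))

/-- the ODE satisfied by the derivative -/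
lemma ode {b y : ℝ} (hb : 0 < b) (hy : |y| < 1) :
    (1 - y) * ∑' r : ℕ, c b r * ((r : ℝ) * y ^ (r - 1))
      = b * ∑' r : ℕ, c b r * y ^ r := by
  set f : ℕ → ℝ := fun r => c b r * ((r : ℝ) * y ^ (r - 1)) with hf
  have hs : Summable f := summable_d hb hy
  have hsplit : (fun n : ℕ => f (n + 1))
      = fun n : ℕ => b * (c b n * y ^ n) + y * f n := by
    funext n
    have h1 : f (n + 1) = (((n : ℝ) + 1) * c b (n + 1)) * y ^ n := by
      simp only [hf]; push_cast; ring
    have h2 : y * f n = (n : ℝ) * c b n * y ^ n := by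
      cases n with
      | zero => simp [hf]
      | succ m =>
        simp only [hf]
        push_cast
        ring
    rw [h1, c_succ_mul, h2]
    ring
  have hD : ∑' r, f r = f 0 + ∑' n, f (n + 1) := Summable.tsum_eq_zero_add hs
  have hf0 : f 0 = 0 := by simp [hf]
  have hsc : Summable (fun n : ℕ => b * (c b n * y ^ n)) :=
    (summable_c hb hy).mul_left b
  have hsd : Summable (fun n : ℕ => y * f n) := hs.mul_left y
  rw [hf0, zero_add, hsplit, Summable.tsum_add hsc hsd, tsum_mul_left, tsum_mul_left] at hD
  have := hD
  nlinarith [this]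

/-- the binomial series identity -/
lemma g_eq {b x : ℝ} (hb : 0 < b) (hx0 : 0 ≤ x) (hx1 : x < 1) :
    ∑' r : ℕ, c b r * x ^ r = (1 - x) ^ (-b) := by
  set u : ℝ := (1 + x) / 2 with hu
  have hu1 : u < 1 := by rw [hu]; linarith
  have hxu : x < u := by rw [hu]; linarith
  have hu0 : 0 < u := by rw [hu]; linarith
  set F : ℝ → ℝ := fun y => (1 - y) ^ b * ∑' r : ℕ, c b r * y ^ r with hF
  have key : ∀ y ∈ Set.Icc (0 : ℝ) x, HasDerivAt F 0 y := by
    intro y hy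
    have hy0 : 0 ≤ y := hy.1
    have hyx : y ≤ x := hy.2
    have hyu : y ∈ Set.Ioo (-u) u := ⟨by linarith, by linarith⟩
    have hy1 : 1 - y > 0 := by linarith
    have h1 : HasDerivAt (fun y : ℝ => (1 - y) ^ b)
        ((b * (1 - y) ^ (b - 1)) * (-1)) y := by
      have := (Real.hasDerivAt_rpow_const (x := 1 - y) (p := b) (Or.inl hy1.ne')).comp y
        ((hasDerivAt_id y).const_sub 1)
      exact this
    have h2 := hasDerivAt_g hb hu1 hyu
    have h3 := h1.mul h2
    have habs : |y| < 1 := by rw [abs_of_nonneg hy0]; linarith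
    have hode := ode hb habs
    refine h3.congr_deriv ?_
    have hpow : (1 - y) ^ (b - 1) * (1 - y) = (1 - y) ^ b := by
      nth_rewrite 2 [← Real.rpow_one (1 - y)]
      rw [← Real.rpow_add hy1]
      norm_num
    have : (1 - y) ^ b * ∑' r : ℕ, c b r * ((r : ℝ) * y ^ (r - 1))
        = (1 - y) ^ (b - 1) * (b * ∑' r : ℕ, c b r * y ^ r) := by
      rw [← hode, ← hpow]; ring
    rw [this]
    ring
  have hconst : F x = F 0 := by
    have := constant_of_has_deriv_right_zero
      (f := F) (a := 0) (b := x)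
      (fun y hy => (key y hy).continuousAt.continuousWithinAt)
      (fun y hy => ((key y ⟨hy.1, hy.2.le⟩).hasDerivWithinAt))
      x (Set.mem_Icc.mpr ⟨hx0, le_refl x⟩)
    exact this
  have hF0 : F 0 = 1 := by
    have hsum0 : ∑' r : ℕ, c b r * (0:ℝ) ^ r = 1 := by
      rw [tsum_eq_single 0]
      · simp [c_zero]
      · intro r hr
        cases r with
        | zero => exact absurd rfl hr
        | succ m => simp
    simp [hF, hsum0]
  have h1x : (0:ℝ) < 1 - x := by linarith
  have hne : (1 - x) ^ b ≠ 0 := (Real.rpow_pos_of_pos h1x b).ne'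
  rw [hF0] at hconst
  simp only [hF] at hconst
  rw [Real.rpow_neg h1x.le]
  exact eq_inv_of_mul_eq_one_right hconst


lemma sum_pow {a p y : ℝ} (ha : 0 < a) (hp0 : 0 < p) (hp1 : p < 1)
    (hy0 : 0 ≤ y) (hy1 : y ≤ 1) :
    ∑' k : ℕ, y ^ k * nbPMF a p k = (1 - p) ^ a * (1 - p * y) ^ (-a) := by
  have hpy0 : 0 ≤ p * y := by positivity
  have hpy1 : p * y < 1 := lt_of_le_of_lt (by nlinarith) hp1
  have hterm : ∀ k : ℕ, y ^ k * nbPMF a p k = (1 - p) ^ a * (c a k * (p * y) ^ k) := by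
    intro k
    simp only [nbPMF, c, mul_pow]
    ring
  rw [tsum_congr hterm, tsum_mul_left, g_eq ha hpy0 hpy1]

lemma sum_mul {a p y : ℝ} (ha : 0 < a) (hp0 : 0 < p) (hp1 : p < 1)
    (hy0 : 0 ≤ y) (hy1 : y ≤ 1) :
    ∑' k : ℕ, (k : ℝ) * y ^ (k - 1) * nbPMF a p k
      = a * p * (1 - p) ^ a * (1 - p * y) ^ (-(a + 1)) := by
  have hpy0 : 0 ≤ p * y := by positivity
  have hpy1 : p * y < 1 := lt_of_le_of_lt (by nlinarith) hp1
  have habs : |p * y| < 1 := by rwa [abs_of_nonneg hpy0]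
  set f : ℕ → ℝ := fun k => (k : ℝ) * y ^ (k - 1) * nbPMF a p k with hf
  have hterm : ∀ k : ℕ, f (k + 1) = (a * p * (1 - p) ^ a) * (c (a + 1) k * (p * y) ^ k) := by
    intro k
    have h1 : f (k + 1) = (((k : ℝ) + 1) * c a (k + 1)) * ((1 - p) ^ a * (p * (p * y) ^ k)) := by
      simp only [hf, nbPMF, c, Nat.add_sub_cancel, mul_pow]
      push_cast
      ring
    rw [h1, c_shift]
    ring
  have hsum1 : Summable (fun k : ℕ => f (k + 1)) := by
    rw [funext hterm]
    exact (summable_c (by linarith) habs).mul_left _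
  have hsumf : Summable f := (summable_nat_add_iff 1).mp hsum1
  have hzero : f 0 = 0 := by simp [hf]
  rw [Summable.tsum_eq_zero_add hsumf, hzero, zero_add, tsum_congr hterm, tsum_mul_left,
    g_eq (by linarith : (0:ℝ) < a + 1) hpy0 hpy1]

end NBaux


/-- If `D ~ NB(a, p)` with `p = (1+ε)/(a+2+ε)` and `ξ ∈ (0,1)` satisfies
`E[D ξ^{D-1}] = ξ E[D]`, then `((a+1)/(a+2+ε-(1+ε)ξ))^{a+1} = ξ` and
`1 - E[ξ^D] = 1 - ξ^{a/(a+1)}`. -/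
theorem nb_fixed_point (a ε ξ : ℝ) (ha : 0 < a) (hε : 0 < ε)
    (p : ℝ) (hp : p = (1 + ε) / (a + 2 + ε))
    (hξ : ξ ∈ Set.Ioo (0 : ℝ) 1)
    (hfix : ∑' k : ℕ, (k : ℝ) * ξ ^ (k - 1) * nbPMF a p k
      = ξ * ∑' k : ℕ, (k : ℝ) * nbPMF a p k) :
    ((a + 1) / (a + 2 + ε - (1 + ε) * ξ)) ^ (a + 1) = ξ ∧
    1 - ∑' k : ℕ, ξ ^ k * nbPMF a p k = 1 - ξ ^ (a / (a + 1)) := by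

  obtain ⟨hξ0, hξ1⟩ := hξ
  have hS : (0:ℝ) < a + 2 + ε := by linarith
  have hp0 : 0 < p := by rw [hp]; positivity
  have hp1 : p < 1 := by
    rw [hp, div_lt_one hS]; linarith
  have hA0 : (0:ℝ) < 1 - p := by linarith
  have hB0 : (0:ℝ) < 1 - p * ξ := by nlinarith
  have hA : 1 - p = (a + 1) / (a + 2 + ε) := by
    rw [hp]; field_simp; ring
  have hB : 1 - p * ξ = (a + 2 + ε - (1 + ε) * ξ) / (a + 2 + ε) := by
    rw [hp]; field_simp
  have hden : (0:ℝ) < a + 2 + ε - (1 + ε) * ξ := by nlinarith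
  -- rewrite hfix
  have E1 := NBaux.sum_mul (a := a) (p := p) (y := ξ) ha hp0 hp1 hξ0.le hξ1.le
  have E2 := NBaux.sum_mul (a := a) (p := p) (y := 1) ha hp0 hp1 zero_le_one le_rfl
  have E2' : ∑' k : ℕ, (k : ℝ) * nbPMF a p k
      = a * p * (1 - p) ^ a * (1 - p) ^ (-(a + 1)) := by
    simp only [one_pow, mul_one] at E2
    exact E2
  rw [E1, E2'] at hfix
  have hC : (0:ℝ) < a * p * (1 - p) ^ a := by
    have := Real.rpow_pos_of_pos hA0 a
    positivity
  have hXY : (1 - p * ξ) ^ (-(a + 1)) = ξ * (1 - p) ^ (-(a + 1)) := by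
    have h := hfix
    rw [show ξ * (a * p * (1 - p) ^ a * (1 - p) ^ (-(a + 1)))
        = a * p * (1 - p) ^ a * (ξ * (1 - p) ^ (-(a + 1))) from by ring] at h
    exact mul_left_cancel₀ hC.ne' h
  have hApow : (0:ℝ) < (1 - p) ^ (a + 1) := Real.rpow_pos_of_pos hA0 _
  have hBpow : (0:ℝ) < (1 - p * ξ) ^ (a + 1) := Real.rpow_pos_of_pos hB0 _
  have key : ((1 - p) / (1 - p * ξ)) ^ (a + 1) = ξ := by
    rw [Real.div_rpow hA0.le hB0.le]
    rw [Real.rpow_neg hB0.le, Real.rpow_neg hA0.le] at hXY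
    rw [div_eq_iff hBpow.ne']
    field_simp at hXY
    linarith [hXY]
  have hbase : (a + 1) / (a + 2 + ε - (1 + ε) * ξ) = (1 - p) / (1 - p * ξ) := by
    rw [hA, hB, div_div_div_eq]
    rw [div_eq_div_iff (by positivity) (by positivity)]
    ring
  constructor
  · rw [hbase]; exact key
  · have E3 := NBaux.sum_pow (a := a) (p := p) (y := ξ) ha hp0 hp1 hξ0.le hξ1.le
    have h4 : (1 - p) ^ a * (1 - p * ξ) ^ (-a) = ((1 - p) / (1 - p * ξ)) ^ a := by
      rw [Real.div_rpow hA0.le hB0.le, Real.rpow_neg hB0.le, div_eq_mul_inv]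
    have h5 : ((1 - p) / (1 - p * ξ)) ^ a
        = (((1 - p) / (1 - p * ξ)) ^ (a + 1)) ^ (a / (a + 1)) := by
      rw [← Real.rpow_mul (div_nonneg hA0.le hB0.le)]
      congr 1
      field_simp
    rw [E3, h4, h5, key]
end

section
/- The unique solution of the initial value problem s'(t) = 2((2+α)s(t) - 2)²/(2t+α)², s(0) = 1, on the interval [0, α/(2(α+1))) is s(t) = (α - 2t)/(α - 2(α+1)t), and s(t) → ∞ as t → (α/(2(α+1)))⁻. -/
open Set Filter Topology

/-- The unique solution of `s'(t) = 2((2+α)s(t)-2)²/(2t+α)²` with `s(0) = 1` on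
`[0, α/(2(α+1)))` is `s(t) = (α-2t)/(α-2(α+1)t)`, and `s(t) → ∞` as
`t → (α/(2(α+1)))⁻`. -/
theorem susceptibility_ode (α : ℝ) (hα : 0 < α) (s : ℝ → ℝ)
    (hderiv : ∀ t ∈ Set.Ico (0 : ℝ) (α / (2 * (α + 1))),
      HasDerivAt s (2 * ((2 + α) * s t - 2) ^ 2 / (2 * t + α) ^ 2) t)
    (h0 : s 0 = 1) :
    (∀ t ∈ Set.Ico (0 : ℝ) (α / (2 * (α + 1))),
      s t = (α - 2 * t) / (α - 2 * (α + 1) * t)) ∧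
    Filter.Tendsto s
      (nhdsWithin (α / (2 * (α + 1))) (Set.Ico (0 : ℝ) (α / (2 * (α + 1)))))
      Filter.atTop := by
  set T := α / (2 * (α + 1)) with hT
  have hα1 : (0:ℝ) < α + 1 := by linarith
  have hTpos : 0 < T := by rw [hT]; positivity
  have hmem0 : (0:ℝ) ∈ Ico (0:ℝ) T := ⟨le_refl _, hTpos⟩
  have hden : ∀ t ∈ Ico (0:ℝ) T, 0 < 2*t + α := fun t ht => by
    have := ht.1; linarith
  have hden2 : ∀ t ∈ Ico (0:ℝ) T, 0 < α - 2*(α+1)*t := by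
    intro t ht
    have h2 := (lt_div_iff₀ (by positivity : (0:ℝ) < 2*(α+1))).mp ht.2
    nlinarith
  have hint : interior (Ico (0:ℝ) T) = Ioo 0 T := interior_Ico
  have hcont : ContinuousOn s (Ico (0:ℝ) T) := fun t ht =>
    (hderiv t ht).continuousAt.continuousWithinAt
  have hmono : MonotoneOn s (Ico (0:ℝ) T) := by
    apply monotoneOn_of_deriv_nonneg (convex_Ico 0 T) hcont
    · intro x hx
      rw [hint] at hx
      exact (hderiv x (Ioo_subset_Ico_self hx)).differentiableAt.differentiableWithinAt
    · intro x hx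
      rw [hint] at hx
      rw [(hderiv x (Ioo_subset_Ico_self hx)).deriv]
      have := hden x (Ioo_subset_Ico_self hx)
      positivity
  have hs1 : ∀ t ∈ Ico (0:ℝ) T, 1 ≤ s t := fun t ht => by
    have := hmono hmem0 ht ht.1
    rw [h0] at this; exact this
  have hspos : ∀ t ∈ Ico (0:ℝ) T, 0 < (2+α) * s t - 2 := fun t ht => by
    nlinarith [hs1 t ht]
  set z : ℝ → ℝ := fun t => ((2*t+α)/((2+α)*s t - 2) - (α - 2*(α+1)*t)/α)/(2*t+α) with hz
  have hzderiv : ∀ t ∈ Ico (0:ℝ) T, HasDerivAt z 0 t := by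
    intro t ht
    have hd1 := hden t ht
    have hd3 := hspos t ht
    have h1 : HasDerivAt (fun t : ℝ => 2*t+α) 2 t := by
      simpa using ((hasDerivAt_id t).const_mul (2:ℝ)).add_const α
    have h2 : HasDerivAt (fun t => (2+α)*s t - 2)
        ((2+α) * (2 * ((2 + α) * s t - 2) ^ 2 / (2 * t + α) ^ 2)) t :=
      ((hderiv t ht).const_mul _).sub_const 2
    have h3 := h1.div h2 (ne_of_gt hd3)
    have h4 : HasDerivAt (fun t : ℝ => (α - 2*(α+1)*t)/α) ((-(2*(α+1)))/α) t := by
      have : HasDerivAt (fun t : ℝ => α - 2*(α+1)*t) (-(2*(α+1))) t := by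
        simpa using ((hasDerivAt_id t).const_mul (2*(α+1))).const_sub α
      exact this.div_const α
    have h5 := (h3.sub h4).div h1 (ne_of_gt hd1)
    refine h5.congr_deriv ?_
    simp only [Pi.div_apply, Pi.sub_apply]
    have hne1 : (2*t+α) ≠ 0 := ne_of_gt hd1
    have hne2 : ((2+α) * s t - 2) ≠ 0 := ne_of_gt hd3
    field_simp
    ring
  have hzconst : ∀ t ∈ Ico (0:ℝ) T, z t = z 0 := by
    intro t ht
    have hc : ContinuousOn z (Ico (0:ℝ) T) := fun x hx =>
      (hzderiv x hx).continuousAt.continuousWithinAt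
    have hd : DifferentiableOn ℝ z (interior (Ico (0:ℝ) T)) := by
      intro x hx
      rw [hint] at hx
      exact (hzderiv x (Ioo_subset_Ico_self hx)).differentiableAt.differentiableWithinAt
    have hd0 : ∀ x ∈ interior (Ico (0:ℝ) T), deriv z x = 0 := by
      intro x hx
      rw [hint] at hx
      exact (hzderiv x (Ioo_subset_Ico_self hx)).deriv
    have hm := monotoneOn_of_deriv_nonneg (convex_Ico 0 T) hc hd
      (fun x hx => le_of_eq (hd0 x hx).symm)
    have ha := antitoneOn_of_deriv_nonpos (convex_Ico 0 T) hc hd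
      (fun x hx => le_of_eq (hd0 x hx))
    exact le_antisymm (ha hmem0 ht ht.1) (hm hmem0 ht ht.1)
  have hz0 : z 0 = 0 := by
    simp only [hz, h0, mul_zero, mul_one, zero_add, mul_zero, sub_zero]
    field_simp
    rw [show (2:ℝ) + α - 2 = α by ring, div_self (ne_of_gt hα)]; ring
  have key : ∀ t ∈ Ico (0:ℝ) T, s t = (α - 2 * t) / (α - 2 * (α + 1) * t) := by
    intro t ht
    have hzt : z t = 0 := by rw [hzconst t ht, hz0]
    have hd1 := hden t ht
    have hd2 := hden2 t ht
    have hd3 := hspos t ht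
    simp only [hz] at hzt
    rw [div_eq_zero_iff] at hzt
    rcases hzt with hzt | hzt
    · rw [sub_eq_zero] at hzt
      rw [eq_div_iff (ne_of_gt hd2)]
      have := div_eq_div_iff (ne_of_gt hd3) (ne_of_gt hα) |>.mp hzt
      nlinarith [this]
    · exact absurd hzt (ne_of_gt hd1)
  refine ⟨key, ?_⟩
  have heq : ∀ᶠ t in 𝓝[Ico (0:ℝ) T] T, s t = (α - 2 * t) / (α - 2 * (α + 1) * t) :=
    eventually_nhdsWithin_of_forall key
  have hC : (0:ℝ) < α - 2 * T := by
    have : α - 2 * T = α^2/(α+1) := by rw [hT]; field_simp; ring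
    rw [this]; positivity
  have hT0 : α - 2*(α+1)*T = 0 := by rw [hT]; field_simp; ring
  have hc1 : Continuous (fun t : ℝ => α - 2 * t) := by fun_prop
  have hc2 : Continuous (fun t : ℝ => α - 2*(α+1)*t) := by fun_prop
  have hnum : Tendsto (fun t : ℝ => α - 2 * t) (𝓝[Ico (0:ℝ) T] T) (𝓝 (α - 2 * T)) :=
    (hc1.tendsto T).mono_left nhdsWithin_le_nhds
  have hdenom : Tendsto (fun t : ℝ => α - 2*(α+1)*t) (𝓝[Ico (0:ℝ) T] T) (𝓝[>] 0) := by
    apply tendsto_nhdsWithin_of_tendsto_nhds_of_eventually_within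
    · have h := hc2.tendsto T
      rw [hT0] at h
      exact h.mono_left nhdsWithin_le_nhds
    · exact eventually_nhdsWithin_of_forall (fun x hx => hden2 x hx)
  have htend : Tendsto (fun t : ℝ => (α - 2 * t) / (α - 2 * (α + 1) * t))
      (𝓝[Ico (0:ℝ) T] T) atTop := by
    simp only [div_eq_mul_inv]
    exact Filter.Tendsto.pos_mul_atTop hC hnum hdenom.inv_tendsto_nhdsGT_zero
  exact (Filter.tendsto_congr' heq).mpr htend
end
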